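/- For every t ∈ ℝ with 0 < t ≤ 3/2, one has (3/2 − t)² > (3/4)·(3 − 4t), and 3/2 − t is the minimum of {|s| : s ∈ Spec(t)}. (On the round 3-sphere, with scalar curvature S = 6 and |dη| = 2, the right-hand side (3/4)(3 − 4t) equals the magnetic Friedrich lower bound n/(4(n−1))·inf(S − 4t⌊n/2⌋^{1/2}|dη|) for n = 3; hence the magnetic Friedrich inequality (λ₁^{tη})² ≥ (3/4)(3 − 4t) is strict on the round 3-sphere for every t ∈ (0, 3/2].) -/
import Mathlib


/-- `f₀(k,p,t) = (1 + t + 2p − k)² + 4(k − p)(p + 1)`. -/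
noncomputable def f0 (k p : ℤ) (t : ℝ) : ℝ :=
  (1 + t + 2 * (p : ℝ) - (k : ℝ)) ^ 2 + 4 * ((k : ℝ) - (p : ℝ)) * ((p : ℝ) + 1)

/-- The spectrum of the magnetic Dirac operator `D^{tη}` on the round 3-sphere of
sectional curvature 1, where `η` is the Reeb one-form of the Hopf fibration. -/
noncomputable def Spec (t : ℝ) : Set ℝ :=
  {s | ∃ k : ℕ, s = 3 / 2 + (k : ℝ) + t} ∪
    {s | ∃ k : ℕ, s = 3 / 2 + (k : ℝ) - t} ∪
    {s | ∃ k p : ℕ, p < k ∧ s = 1 / 2 + Real.sqrt (f0 (k : ℤ) (p : ℤ) t)} ∪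
    {s | ∃ k p : ℕ, p < k ∧ s = 1 / 2 - Real.sqrt (f0 (k : ℤ) (p : ℤ) t)}

/-- For `0 < t ≤ 3/2`, one has `(3/2 − t)² > (3/4)(3 − 4t)`, and `3/2 − t` is the
minimum of `{|s| : s ∈ Spec t}`: the magnetic Friedrich inequality is strict on `𝕊³`. -/
theorem stmt14 (t : ℝ) (ht0 : 0 < t) (ht : t ≤ 3 / 2) :
    (3 / 2 - t) ^ 2 > 3 / 4 * (3 - 4 * t) ∧
    IsLeast {r : ℝ | ∃ s ∈ Spec t, |s| = r} (3 / 2 - t) := by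
  have hsq : ∀ k p : ℕ, p < k → (2 : ℝ) ≤ Real.sqrt (f0 (k : ℤ) (p : ℤ) t) := by
    intro k p hpk
    have h4 : (4 : ℝ) ≤ f0 (k : ℤ) (p : ℤ) t := by
      have hk : (p : ℝ) + 1 ≤ (k : ℝ) := by exact_mod_cast hpk
      have hp : (0 : ℝ) ≤ (p : ℝ) := Nat.cast_nonneg p
      have := sq_nonneg (1 + t + 2 * (p : ℝ) - (k : ℝ))
      unfold f0
      push_cast
      nlinarith
    calc (2 : ℝ) = Real.sqrt 4 := by
          rw [show (4 : ℝ) = 2 ^ 2 by norm_num, Real.sqrt_sq (by norm_num)]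
      _ ≤ _ := Real.sqrt_le_sqrt h4
  refine ⟨by nlinarith, ⟨3 / 2 + (0 : ℕ) - t, Or.inl (Or.inl (Or.inr ⟨0, rfl⟩)), ?_⟩, ?_⟩
  · rw [abs_of_nonneg (by push_cast; linarith)]; push_cast; ring
  · rintro r ⟨s, hs, rfl⟩
    rcases hs with ((⟨k, rfl⟩ | ⟨k, rfl⟩) | ⟨k, p, hpk, rfl⟩) | ⟨k, p, hpk, rfl⟩
    · rw [abs_of_nonneg (by positivity)]
      have : (0 : ℝ) ≤ (k : ℝ) := Nat.cast_nonneg k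
      linarith
    · have : (0 : ℝ) ≤ (k : ℝ) := Nat.cast_nonneg k
      rw [abs_of_nonneg (by linarith)]
      linarith
    · have := hsq k p hpk
      rw [abs_of_nonneg (by linarith)]
      linarith
    · have := hsq k p hpk
      rw [abs_of_nonpos (by linarith)]
      linarith
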